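/- Closed Carathéodory theorem: if X ⊆ ℝ^N is closed and a ∈ conv(X), then there exist n ≥ 0 and affinely independent points x0,…,xn ∈ X such that a ∈ conv{x0,…,xn} and conv{x0,…,xn} ∩ X = {x0,…,xn}. -/

import Mathlib

open Finset Metric Matrix

section aux

variable {E : Type*} [NormedAddCommGroup E] [InnerProductSpace ℝ E]

lemma aux_mem_convexHull_range_iff {m : ℕ} (x : Fin m → E) (p : E) :
    p ∈ convexHull ℝ (Set.range x) ↔
      ∃ w : Fin m → ℝ, (∀ i, 0 ≤ w i) ∧ ∑ i, w i = 1 ∧ ∑ i, w i • x i = p := by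
  classical
  constructor
  · intro hp
    rw [convexHull_range_eq_exists_affineCombination] at hp
    obtain ⟨s, w, hw0, hw1, hcomb⟩ := hp
    refine ⟨fun i => if i ∈ s then w i else 0, fun i => ?_, ?_, ?_⟩
    · show (0:ℝ) ≤ if i ∈ s then w i else 0
      split
      · exact hw0 i ‹_›
      · exact le_rfl
    · rw [Finset.sum_ite_mem, Finset.univ_inter, hw1]
    · rw [← hcomb, s.affineCombination_eq_linear_combination x w hw1]
      simp only [ite_smul, zero_smul]
      rw [Finset.sum_ite_mem, Finset.univ_inter]
  · rintro ⟨w, hw0, hw1, rfl⟩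
    rw [← Finset.univ.centerMass_eq_of_sum_1 x hw1]
    exact Finset.univ.centerMass_mem_convexHull (fun i _ => hw0 i)
      (by rw [hw1]; norm_num) (fun i _ => Set.mem_range_self i)

lemma aux_inner_sum {m : ℕ} (c d : Fin m → ℝ) (x : Fin m → E) :
    (inner ℝ (∑ k, c k • x k) (∑ l, d l • x l) : ℝ)
      = ∑ k, ∑ l, c k * d l * (inner ℝ (x k) (x l) : ℝ) := by
  rw [sum_inner]
  refine Finset.sum_congr rfl fun k _ => ?_
  rw [real_inner_smul_left, inner_sum, Finset.mul_sum]
  refine Finset.sum_congr rfl fun l _ => ?_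
  rw [real_inner_smul_right]; ring

lemma aux_det_pos {m : ℕ} {x : Fin m → E} (hx : AffineIndependent ℝ x) :
    0 < (Matrix.of fun i j : Fin m => (inner ℝ (x i) (x j) : ℝ) + 1).det := by
  apply Matrix.PosDef.det_pos
  rw [Matrix.posDef_iff_dotProduct_mulVec]
  constructor
  · ext i j
    simp [Matrix.conjTranspose_apply, real_inner_comm (x j) (x i)]
  · intro v hv
    have key : star v ⬝ᵥ ((Matrix.of fun i j : Fin m => (inner ℝ (x i) (x j) : ℝ) + 1) *ᵥ v)
        = ‖∑ i, v i • x i‖ ^ 2 + (∑ i, v i) ^ 2 := by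
      simp only [dotProduct, Matrix.mulVec, Matrix.of_apply, star_trivial]
      rw [← real_inner_self_eq_norm_sq, aux_inner_sum v v x]
      rw [sq, Finset.sum_mul]
      rw [← Finset.sum_add_distrib]
      refine Finset.sum_congr rfl fun i _ => ?_
      simp only [Finset.mul_sum]
      rw [← Finset.sum_add_distrib]
      exact Finset.sum_congr rfl fun l _ => by ring
    rw [key]
    rcases eq_or_ne (∑ i, v i) 0 with hs | hs
    · have hz : ∑ i, v i • x i ≠ 0 := by
        intro h0
        apply hv
        funext i
        exact affineIndependent_iff.mp hx Finset.univ v hs h0 i (Finset.mem_univ i)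
      have : 0 < ‖∑ i, v i • x i‖ ^ 2 :=
        pow_two_pos_of_ne_zero (norm_ne_zero_iff.mpr hz)
      nlinarith [sq_nonneg (∑ i, v i)]
    · have : 0 < (∑ i, v i) ^ 2 := pow_two_pos_of_ne_zero hs
      nlinarith [sq_nonneg ‖∑ i, v i • x i‖]

lemma aux_det_transform {m : ℕ} (x x' : Fin m → E) (v : Fin m → Fin m → ℝ)
    (hv1 : ∀ i, ∑ k, v i k = 1) (hv2 : ∀ i, ∑ k, v i k • x k = x' i) :
    (Matrix.of fun i j : Fin m => (inner ℝ (x' i) (x' j) : ℝ) + 1).det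
      = (Matrix.of v).det ^ 2
        * (Matrix.of fun i j : Fin m => (inner ℝ (x i) (x j) : ℝ) + 1).det := by
  have key : (Matrix.of fun i j : Fin m => (inner ℝ (x' i) (x' j) : ℝ) + 1)
      = Matrix.of v * (Matrix.of fun i j : Fin m => (inner ℝ (x i) (x j) : ℝ) + 1)
        * (Matrix.of v)ᵀ := by
    ext i j
    simp only [Matrix.mul_apply, Matrix.transpose_apply, Matrix.of_apply]
    rw [← hv2 i, ← hv2 j, aux_inner_sum]
    calc (∑ k, ∑ l, v i k * v j l * (inner ℝ (x k) (x l) : ℝ)) + 1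
        = (∑ k, ∑ l, v i k * v j l * (inner ℝ (x k) (x l) : ℝ))
            + (∑ k, v i k) * (∑ l, v j l) := by rw [hv1 i, hv1 j, mul_one]
      _ = ∑ k, ∑ l, (v i k * v j l * (inner ℝ (x k) (x l) : ℝ) + v i k * v j l) := by
          rw [Finset.sum_mul, ← Finset.sum_add_distrib]
          refine Finset.sum_congr rfl fun k _ => ?_
          rw [Finset.mul_sum, ← Finset.sum_add_distrib]
      _ = ∑ l, ∑ k, v i k * ((inner ℝ (x k) (x l) : ℝ) + 1) * v j l := by
          rw [Finset.sum_comm]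
          exact Finset.sum_congr rfl fun l _ => Finset.sum_congr rfl fun k _ => by ring
      _ = ∑ l, (∑ k, v i k * ((inner ℝ (x k) (x l) : ℝ) + 1)) * v j l := by
          simp_rw [Finset.sum_mul]
  rw [key, Matrix.det_mul, Matrix.det_mul, Matrix.det_transpose]; ring

lemma aux_det_one_updateRow {m : ℕ} (j : Fin m) (c : Fin m → ℝ) :
    ((1 : Matrix (Fin m) (Fin m) ℝ).updateRow j c).det = c j := by
  have hc : c = ∑ k, c k • (1 : Matrix (Fin m) (Fin m) ℝ) k := by
    funext l
    simp [Matrix.one_apply, Finset.sum_apply, mul_ite, mul_one, mul_zero, Finset.sum_ite_eq']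
  rw [hc, Matrix.det_updateRow_sum]
  simp [Matrix.one_apply, mul_ite]

lemma aux_pad {E' : Type*} (t : Finset E') (ht : t.Nonempty) (m : ℕ)
    (hcard : t.card ≤ m + 1) : ∃ f : Fin (m + 1) → E', Set.range f = ↑t := by
  classical
  obtain ⟨y₀, hy₀⟩ := ht
  refine ⟨fun i => if h : (i : ℕ) < t.card then (t.equivFin.symm ⟨i, h⟩ : E') else y₀, ?_⟩
  ext e
  constructor
  · rintro ⟨i, rfl⟩
    by_cases h : (i : ℕ) < t.card
    · simp only [h, dif_pos]
      exact (t.equivFin.symm ⟨i, h⟩).2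
    · simpa [h] using hy₀
  · intro he
    refine ⟨⟨(t.equivFin ⟨e, he⟩ : ℕ), lt_of_lt_of_le (t.equivFin ⟨e, he⟩).2 hcard⟩, ?_⟩
    have h : ((t.equivFin ⟨e, he⟩ : ℕ)) < t.card := (t.equivFin ⟨e, he⟩).2
    simp [h]

end aux
set_option maxHeartbeats 2000000 in
theorem stmt_6 {N : ℕ} (X : Set (EuclideanSpace ℝ (Fin N))) (hX : IsClosed X)
    (a : EuclideanSpace ℝ (Fin N)) (ha : a ∈ convexHull ℝ X) :
    ∃ (n : ℕ) (x : Fin (n + 1) → EuclideanSpace ℝ (Fin N)),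
      AffineIndependent ℝ x ∧ (∀ i, x i ∈ X) ∧
      a ∈ convexHull ℝ (Set.range x) ∧
      convexHull ℝ (Set.range x) ∩ X = Set.range x := by
  classical
  have hex : ∃ n : ℕ, ∃ x : Fin (n + 1) → EuclideanSpace ℝ (Fin N),
      (∀ i, x i ∈ X) ∧ a ∈ convexHull ℝ (Set.range x) := by
    rw [convexHull_eq_union] at ha
    simp only [Set.mem_iUnion] at ha
    obtain ⟨t, hts, -, hat⟩ := ha
    have ht : t.Nonempty := by
      rcases t.eq_empty_or_nonempty with rfl | h
      · simp at hat
      · exact h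
    obtain ⟨f, hf⟩ := aux_pad t ht (t.card - 1) (by have := ht.card_pos; omega)
    exact ⟨t.card - 1, f, fun i => hts (by rw [← hf]; exact Set.mem_range_self i),
      by rw [hf]; exact hat⟩
  set n := Nat.find hex with hn
  obtain ⟨x₀, hx₀X, hx₀a⟩ := Nat.find_spec hex
  have hmin : ∀ x : Fin (n + 1) → EuclideanSpace ℝ (Fin N),
      (∀ i, x i ∈ X) → a ∈ convexHull ℝ (Set.range x) → AffineIndependent ℝ x := by
    intro x hxX hxa
    by_contra hdep
    have hn0 : n ≠ 0 := by
      rintro h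
      apply hdep
      haveI : Subsingleton (Fin (n + 1)) := by rw [h]; exact Fin.subsingleton_one
      exact affineIndependent_of_subsingleton ℝ x
    have hsmall : ∃ t : Finset (EuclideanSpace ℝ (Fin N)),
        t.Nonempty ∧ ↑t ⊆ X ∧ a ∈ convexHull ℝ (↑t : Set (EuclideanSpace ℝ (Fin N))) ∧
          t.card ≤ n := by
      set t := Finset.univ.image x with htdef
      have hrange : (t : Set (EuclideanSpace ℝ (Fin N))) = Set.range x := by
        simp [htdef]
      have htne : t.Nonempty := ⟨x 0, Finset.mem_image.mpr ⟨0, Finset.mem_univ 0, rfl⟩⟩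
      have htX : (t : Set _) ⊆ X := by
        rw [hrange]; rintro z ⟨i, rfl⟩; exact hxX i
      have hta : a ∈ convexHull ℝ (↑t : Set _) := by rw [hrange]; exact hxa
      by_cases hcard : t.card ≤ n
      · exact ⟨t, htne, htX, hta, hcard⟩
      · have hle : t.card ≤ n + 1 := le_trans Finset.card_image_le (by simp)
        have hc : t.card = n + 1 := by omega
        have hinj : Function.Injective x := by
          have h2 := Finset.card_image_iff.mp
            (by rw [hc, Finset.card_univ, Fintype.card_fin] :
              (Finset.univ.image x).card = Finset.univ.card)
          intro u v huv
          exact h2 (Finset.mem_coe.mpr (Finset.mem_univ u))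
            (Finset.mem_coe.mpr (Finset.mem_univ v)) huv
        have hti : ¬ AffineIndependent ℝ ((↑) : t → EuclideanSpace ℝ (Fin N)) := by
          intro h
          apply hdep
          exact AffineIndependent.comp_embedding
            ⟨fun i => ⟨x i, Finset.mem_image.mpr ⟨i, Finset.mem_univ i, rfl⟩⟩,
             fun u v huv => hinj (congrArg Subtype.val huv)⟩ h
        obtain ⟨y, hy⟩ := Caratheodory.mem_convexHull_erase hti hta
        have hymem : (y : EuclideanSpace ℝ (Fin N)) ∈ t := Finset.mem_coe.mp y.2
        refine ⟨t.erase y, ?_, ?_, hy, ?_⟩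
        · rw [← Finset.card_pos, Finset.card_erase_of_mem hymem, hc]; omega
        · exact Set.Subset.trans (Finset.coe_subset.mpr (Finset.erase_subset _ _)) htX
        · rw [Finset.card_erase_of_mem hymem, hc]; omega
    obtain ⟨t, htne, htX, hta, htc⟩ := hsmall
    obtain ⟨m, hm⟩ : ∃ m : ℕ, m + 1 = n := ⟨n - 1, by omega⟩
    obtain ⟨f, hf⟩ := aux_pad t htne m (by omega)
    exact Nat.find_min hex (show m < n by omega)
      ⟨f, fun i => htX (by rw [← hf]; exact Set.mem_range_self i), by rw [hf]; exact hta⟩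
  set R : ℝ := ∑ j, dist (x₀ j) a with hR
  have hx₀ball : ∀ i, x₀ i ∈ closedBall a R := by
    intro i
    rw [mem_closedBall]
    exact Finset.single_le_sum (fun j _ => dist_nonneg) (Finset.mem_univ i)
  set K : Set (Fin (n + 1) → EuclideanSpace ℝ (Fin N)) :=
    {x | (∀ i, x i ∈ X ∩ closedBall a R) ∧ a ∈ convexHull ℝ (Set.range x)} with hK
  have hx₀K : x₀ ∈ K := ⟨fun i => ⟨hx₀X i, hx₀ball i⟩, hx₀a⟩
  set W : Set ((Fin (n + 1) → ℝ) × (Fin (n + 1) → EuclideanSpace ℝ (Fin N))) :=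
    {p | ∀ i, 0 ≤ p.1 i} ∩ {p | ∑ i, p.1 i = 1} ∩ {p | ∀ i, p.2 i ∈ X ∩ closedBall a R} ∩
      {p | ∑ i, p.1 i • p.2 i = a} with hW
  have hWclosed : IsClosed W := by
    refine ((IsClosed.inter (IsClosed.inter ?_ ?_) ?_).inter ?_)
    · rw [Set.setOf_forall]
      exact isClosed_iInter fun i =>
        isClosed_le continuous_const ((continuous_apply i).comp continuous_fst)
    · exact isClosed_eq
        (continuous_finset_sum _ fun i _ => (continuous_apply i).comp continuous_fst)
        continuous_const
    · rw [Set.setOf_forall]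
      exact isClosed_iInter fun i =>
        (hX.inter Metric.isClosed_closedBall).preimage ((continuous_apply i).comp continuous_snd)
    · exact isClosed_eq (continuous_finset_sum _ fun i _ =>
        (((continuous_apply i).comp continuous_fst)).smul
          ((continuous_apply i).comp continuous_snd)) continuous_const
  have hWcpt : IsCompact W := by
    refine IsCompact.of_isClosed_subset ?_ hWclosed ?_
      (s := (stdSimplex ℝ (Fin (n + 1))) ×ˢ (Set.univ.pi fun _ => X ∩ closedBall a R))
    · exact (isCompact_stdSimplex (𝕜 := ℝ) (ι := Fin (n + 1))).prod
        (isCompact_univ_pi fun _ => (isCompact_closedBall a R).inter_left hX)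
    · rintro ⟨w, x⟩ ⟨⟨⟨h0, h1⟩, h2⟩, h3⟩
      exact Set.mem_prod.mpr ⟨⟨h0, h1⟩, Set.mem_univ_pi.mpr fun i => h2 i⟩
  have hKW : K = Prod.snd '' W := by
    ext x
    constructor
    · rintro ⟨hx1, hx2⟩
      obtain ⟨w, hw0, hw1, hwa⟩ := (aux_mem_convexHull_range_iff x a).mp hx2
      exact ⟨(w, x), ⟨⟨⟨hw0, hw1⟩, hx1⟩, hwa⟩, rfl⟩
    · rintro ⟨⟨w, x'⟩, ⟨⟨⟨h0, h1⟩, h2⟩, h3⟩, rfl⟩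
      exact ⟨h2, (aux_mem_convexHull_range_iff x' a).mpr ⟨w, h0, h1, h3⟩⟩
  have hKcpt : IsCompact K := hKW ▸ hWcpt.image continuous_snd
  have hKne : K.Nonempty := ⟨x₀, hx₀K⟩
  set g : (Fin (n + 1) → EuclideanSpace ℝ (Fin N)) → ℝ :=
    fun x => (Matrix.of fun i j : Fin (n + 1) => (inner ℝ (x i) (x j) : ℝ) + 1).det with hg
  have hgcont : Continuous g := by
    apply Continuous.matrix_det
    exact continuous_matrix fun i j =>
      (Continuous.inner (continuous_apply i) (continuous_apply j)).add continuous_const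
  obtain ⟨x, hxK, hxmin⟩ := hKcpt.exists_isMinOn hKne hgcont.continuousOn
  have hxX : ∀ i, x i ∈ X := fun i => (hxK.1 i).1
  have hind : AffineIndependent ℝ x := hmin x hxX hxK.2
  refine ⟨n, x, hind, hxX, hxK.2, ?_⟩
  apply Set.Subset.antisymm
  swap
  · rintro z ⟨i, rfl⟩
    exact ⟨subset_convexHull ℝ _ (Set.mem_range_self i), hxX i⟩
  rintro y ⟨hyc, hyX⟩
  by_contra hy
  obtain ⟨c, hc0, hc1, hcy⟩ := (aux_mem_convexHull_range_iff x y).mp hyc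
  obtain ⟨w, hw0, hw1, hwa⟩ := (aux_mem_convexHull_range_iff x a).mp hxK.2
  have hcsupp : (Finset.univ.filter fun i => 0 < c i).Nonempty := by
    by_contra h
    rw [Finset.not_nonempty_iff_eq_empty, Finset.filter_eq_empty_iff] at h
    have hall : ∀ i, c i = 0 :=
      fun i => le_antisymm (not_lt.mp (h (Finset.mem_univ i))) (hc0 i)
    rw [Finset.sum_congr rfl fun i _ => hall i] at hc1
    simp at hc1
  obtain ⟨j, hjmem, hjmin⟩ := Finset.exists_min_image _ (fun i => w i / c i) hcsupp
  have hcj : 0 < c j := (Finset.mem_filter.mp hjmem).2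
  set t : ℝ := w j / c j with htdef
  have ht0 : 0 ≤ t := div_nonneg (hw0 j) hcj.le
  have hwt : ∀ i, 0 ≤ w i - t * c i := by
    intro i
    rcases lt_or_ge 0 (c i) with h | h
    · have h1 : t ≤ w i / c i := hjmin i (Finset.mem_filter.mpr ⟨Finset.mem_univ i, h⟩)
      rw [le_div_iff₀ h] at h1
      linarith
    · have hci : c i = 0 := le_antisymm h (hc0 i)
      rw [hci]; simpa using hw0 i
  have hwj : w j - t * c j = 0 := by
    rw [htdef, div_mul_cancel₀ _ hcj.ne']
    ring
  set x' := Function.update x j y with hx'def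
  have hyball : y ∈ closedBall a R := by
    refine convexHull_min ?_ (convex_closedBall a R) hyc
    rintro z ⟨i, rfl⟩
    exact (hxK.1 i).2
  have hx'X : ∀ i, x' i ∈ X ∩ closedBall a R := by
    intro i
    rcases eq_or_ne i j with rfl | h
    · rw [hx'def]; simp only [Function.update_self]; exact ⟨hyX, hyball⟩
    · rw [hx'def]; simp only [Function.update_of_ne h]; exact hxK.1 i
  have hx'a : a ∈ convexHull ℝ (Set.range x') := by
    rw [aux_mem_convexHull_range_iff]
    refine ⟨fun i => w i - t * c i + (if i = j then t else 0), fun i => ?_, ?_, ?_⟩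
    · show (0:ℝ) ≤ w i - t * c i + if i = j then t else 0
      have := hwt i
      split_ifs <;> linarith
    · rw [Finset.sum_add_distrib, Finset.sum_sub_distrib, ← Finset.mul_sum, hw1, hc1,
        Finset.sum_ite_eq' Finset.univ j fun _ => t]
      simp
    · have h1 : ∀ i ∈ Finset.univ.erase j,
          (w i - t * c i + (if i = j then t else 0)) • x' i = (w i - t * c i) • x i := by
        intro i hi
        have hij : i ≠ j := Finset.ne_of_mem_erase hi
        rw [if_neg hij, add_zero, hx'def, Function.update_of_ne hij]
      have h2 : ∑ i, (w i - t * c i) • x i = a - t • y := by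
        rw [← hwa, ← hcy, Finset.smul_sum, ← Finset.sum_sub_distrib]
        refine Finset.sum_congr rfl fun i _ => ?_
        rw [sub_smul, mul_smul]
      rw [← Finset.sum_erase_add _ _ (Finset.mem_univ j), Finset.sum_congr rfl h1,
        Finset.sum_erase_eq_sub (Finset.mem_univ j), h2]
      simp only [hwj, zero_smul, sub_zero, zero_add, eq_self_iff_true, if_true, hx'def,
        Function.update_self]
      abel
  set B : Matrix (Fin (n + 1)) (Fin (n + 1)) ℝ := (1 : Matrix _ _ ℝ).updateRow j c with hB
  have hv1 : ∀ i, ∑ k, B i k = 1 := by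
    intro i
    rcases eq_or_ne i j with rfl | h
    · rw [hB]; simp only [Matrix.updateRow_self]; exact hc1
    · rw [hB]; simp only [Matrix.updateRow_ne h]
      simp [Matrix.one_apply]
  have hv2 : ∀ i, ∑ k, B i k • x k = x' i := by
    intro i
    rcases eq_or_ne i j with rfl | h
    · rw [hB, hx'def]; simp only [Matrix.updateRow_self, Function.update_self]; exact hcy
    · rw [hB, hx'def]; simp only [Matrix.updateRow_ne h, Function.update_of_ne h]
      simp [Matrix.one_apply]
  have hdet := aux_det_transform x x' (fun i k => B i k) hv1 hv2
  have hdetB : B.det = c j := aux_det_one_updateRow j c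
  have hgx : 0 < g x := aux_det_pos hind
  have hcj1 : c j < 1 := by
    have hle : c j ≤ 1 := hc1 ▸ Finset.single_le_sum (fun i _ => hc0 i) (Finset.mem_univ j)
    rcases hle.lt_or_eq with h | h
    · exact h
    · exfalso
      apply hy
      refine ⟨j, ?_⟩
      have hz : ∀ i ∈ Finset.univ, i ≠ j → c i • x i = 0 := by
        intro i _ hij
        have hsum0 : ∑ i ∈ Finset.univ.erase j, c i = 0 := by
          rw [Finset.sum_erase_eq_sub (Finset.mem_univ j), hc1, ← h]; ring
        have hci : c i = 0 :=
          (Finset.sum_eq_zero_iff_of_nonneg (fun k _ => hc0 k)).mp hsum0 i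
            (Finset.mem_erase.mpr ⟨hij, Finset.mem_univ i⟩)
        rw [hci, zero_smul]
      rw [← hcy, Finset.sum_eq_single_of_mem j (Finset.mem_univ j) hz, h, one_smul]
  have hx'K : x' ∈ K := ⟨hx'X, hx'a⟩
  have hlemin : g x ≤ g x' := isMinOn_iff.mp hxmin x' hx'K
  have hlt : g x' < g x := by
    have hcj2 : c j ^ 2 < 1 := by nlinarith [hc0 j]
    have hgeq : g x' = B.det ^ 2 * g x := hdet
    rw [hgeq, hdetB]
    calc c j ^ 2 * g x < 1 * g x := by exact mul_lt_mul_of_pos_right hcj2 hgx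
      _ = g x := one_mul _
  linarith
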